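/- Lemma A.1: Let X = ℝⁿ, C = (ℝ_{≥0})ⁿ, and identify X* with ℝⁿ via the standard pairing. For x = (x₁,…,xₙ) and λ = (λ₁,…,λₙ) in ℝⁿ put I_x := {i : xᵢ ≥ 0} and I_λ := {i : λᵢ ≥ 0}. Then ψ_C(x,λ) = 0 unless I_x and I_λ are complementary subsets of {1,…,n}, in which case ψ_C(x,λ) = (−1)^{|I_λ|}, where |I_λ| denotes the cardinality of I_λ. -/

import Mathlib

open Pointwise
open scoped Classical

namespace GKM

variable {V : Type*} [AddCommGroup V] [Module ℝ V]

/-- The dual cone `C* = {λ | λ ≥ 0 on C}` of a subset `C` of `V`. -/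
def dualCone (C : Set V) : Set (Module.Dual ℝ V) := {l | ∀ x ∈ C, 0 ≤ l x}

/-- `C` is a closed convex polyhedral cone: the set of nonnegative linear
combinations of a finite subset of `V`. -/
def IsPolyhedralCone (C : Set V) : Prop :=
  ∃ S : Finset V, C = {x | ∃ c : V → ℝ, (∀ v, 0 ≤ c v) ∧ x = ∑ v ∈ S, c v • v}

/-- `F` is a (closed) face of the cone `C`. -/
def IsFaceOf (F C : Set V) : Prop := ∃ l ∈ dualCone C, F = C ∩ {x | l x = 0}

/-- The dimension of (the linear span of) a subset of `V`. -/
noncomputable def sdim (F : Set V) : ℕ := Module.finrank ℝ (Submodule.span ℝ F)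

/-- `ℤ`-valued characteristic function `ξ_S`. -/
noncomputable def ind {α : Type*} (S : Set α) (a : α) : ℤ := if a ∈ S then 1 else 0

/-- `ψ_C(x,λ) = Σ_{F face of C} (−1)^{dim F} ξ_{(F^⊥)*}(x) · ξ_{F*}(λ)`,
where `(F^⊥)* = C + span F` and `F*` is the dual cone of `F`. -/
noncomputable def psi (C : Set V) (x : V) (l : Module.Dual ℝ V) : ℤ :=
  ∑ᶠ F ∈ {F : Set V | IsFaceOf F C},
    (-1 : ℤ) ^ sdim F * ind (C + (Submodule.span ℝ F : Set V)) x * ind (dualCone F) l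

/-- `x` is regular for the hyperplane arrangement `{ker α | α ∈ S}`. -/
def IsRegular (S : Set (Module.Dual ℝ V)) (x : V) : Prop := ∀ α ∈ S, α x ≠ 0

/-- `C` is a chamber of the arrangement `{ker α | α ∈ S}`: a connected component of
the set of regular points, equivalently (for a finite arrangement, which is the case
throughout) a nonempty maximal subset on which each `α ∈ S` has constant sign. -/
def IsChamber (S : Set (Module.Dual ℝ V)) (C : Set V) : Prop :=
  ∃ x, IsRegular S x ∧ C = {y | ∀ α ∈ S, 0 < α x * α y}

/-- The closure of a chamber, described combinatorially (for a chamber of a finite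
hyperplane arrangement this coincides with the topological closure). -/
def chClosure (S : Set (Module.Dual ℝ V)) (C : Set V) : Set V :=
  {y | ∀ α ∈ S, ∀ x ∈ C, 0 ≤ α x * α y}

/-- The hyperplane `ker α` separates `C₁` and `C₂`. -/
def Separates (α : Module.Dual ℝ V) (C₁ C₂ : Set V) : Prop :=
  ∀ x₁ ∈ C₁, ∀ x₂ ∈ C₂, α x₁ * α x₂ < 0

/-- `l(C₁,C₂)`: the number of hyperplanes of the arrangement separating `C₁`,`C₂`. -/
noncomputable def sep (S : Set (Module.Dual ℝ V)) (C₁ C₂ : Set V) : ℕ :=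
  {H : Set V | ∃ α ∈ S, H = {x | α x = 0} ∧ Separates α C₁ C₂}.ncard

/-- `ε(C₁,C₂) = (−1)^{l(C₁,C₂)}`. -/
noncomputable def eps (S : Set (Module.Dual ℝ V)) (C₁ C₂ : Set V) : ℤ :=
  (-1) ^ sep S C₁ C₂

/-- `ψ_R(C₀,x,λ) = Σ_C ε(C₀,C) ψ_{C̄}(x,λ)`, the sum over all chambers `C`. -/
noncomputable def psiR (S : Set (Module.Dual ℝ V)) (C₀ : Set V) (x : V)
    (l : Module.Dual ℝ V) : ℤ :=
  ∑ᶠ C ∈ {C : Set V | IsChamber S C}, eps S C₀ C * psi (chClosure S C) x l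

/-- `λ ∈ X*` is `R`-regular: it vanishes on no nonzero element of a 1-dimensional
face of the closure of a chamber in `X`. -/
def RRegular (S : Set (Module.Dual ℝ V)) (l : Module.Dual ℝ V) : Prop :=
  ∀ C : Set V, IsChamber S C → ∀ F : Set V, IsFaceOf F (chClosure S C) →
    sdim F = 1 → ∀ ω ∈ F, ω ≠ (0 : V) → l ω ≠ 0

/-- `ω` is a nonzero element of a 1-dimensional face of the closure of `C₀`. -/
def InOneDimFaceOfClosure (S : Set (Module.Dual ℝ V)) (C₀ : Set V) (ω : V) : Prop :=
  ω ≠ 0 ∧ ∃ F : Set V, IsFaceOf F (chClosure S C₀) ∧ sdim F = 1 ∧ ω ∈ F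

/-- `(X, X*, R, R∨)` is a (reduced, crystallographic) root system, `R ⊂ X*`
spanning `X*`, with coroot `α∨ = coroot α ∈ X` for each `α ∈ R`. -/
structure IsRootSystem (R : Set (Module.Dual ℝ V)) (coroot : Module.Dual ℝ V → V) : Prop where
  finite : R.Finite
  ne_zero : ∀ α ∈ R, α ≠ 0
  span_top : Submodule.span ℝ R = ⊤
  root_coroot_two : ∀ α ∈ R, α (coroot α) = 2
  pairing_int : ∀ α ∈ R, ∀ β ∈ R, ∃ n : ℤ, β (coroot α) = (n : ℝ)
  reflect_root_mem : ∀ α ∈ R, ∀ β ∈ R, β - β (coroot α) • α ∈ R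
  reflect_coroot : ∀ α ∈ R, ∀ β ∈ R,
    coroot (β - β (coroot α) • α) = coroot β - α (coroot β) • coroot α
  reduced : ∀ α ∈ R, ∀ c : ℝ, c • α ∈ R → c = 1 ∨ c = -1

/-- The Weyl group `W(R)`, the subgroup of `GL(X)` generated by the reflections
`s_α : x ↦ x − α(x)·α∨`, `α ∈ R`. -/
def weylGroup (R : Set (Module.Dual ℝ V)) (coroot : Module.Dual ℝ V → V) :
    Subgroup (V ≃ₗ[ℝ] V) :=
  Subgroup.closure {w : V ≃ₗ[ℝ] V | ∃ α ∈ R, ∀ x, w x = x - α x • coroot α}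

/-- The set `R⁺` of roots positive on the chamber `C`. -/
def posRoots (R : Set (Module.Dual ℝ V)) (C : Set V) : Set (Module.Dual ℝ V) :=
  {α ∈ R | ∀ x ∈ C, 0 < α x}

/-- The root system `R_ω = {α ∈ R | α(ω) = 0}` viewed on the quotient `X/ℝω`:
the set of functionals on `X/ℝω` whose pullback to `X` lies in `R`
(such a pullback automatically kills `ω`, hence lies in `R_ω`). -/
def quotRoots (R : Set (Module.Dual ℝ V)) (ω : V) :
    Set (Module.Dual ℝ (V ⧸ Submodule.span ℝ ({ω} : Set V))) :=
  {β | β.comp (Submodule.span ℝ ({ω} : Set V)).mkQ ∈ R}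

/-- The root system `R_α` (roots `β` with `α(β∨) = 0`) restricted to the
hyperplane `Y = ker α`. -/
def subRoots (R : Set (Module.Dual ℝ V)) (coroot : Module.Dual ℝ V → V)
    (α : Module.Dual ℝ V) : Set (Module.Dual ℝ ↥(LinearMap.ker α)) :=
  {m | ∃ β ∈ R, α (coroot β) = 0 ∧ m = β.comp (LinearMap.ker α).subtype}


namespace A1
variable {n : ℕ}

noncomputable def e (i : Fin n) : Fin n → ℝ := Pi.single i 1

def faceSet (J : Finset (Fin n)) : Set (Fin n → ℝ) :=
  {v | (∀ i, 0 ≤ v i) ∧ ∀ i ∉ J, v i = 0}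

lemma L_apply (L : Module.Dual ℝ (Fin n → ℝ)) (v : Fin n → ℝ) :
    L v = ∑ i, v i * L (e i) := by
  rw [LinearMap.pi_apply_eq_sum_univ L v]
  refine Finset.sum_congr rfl fun i _ => ?_
  rw [smul_eq_mul]
  congr 1
  congr 1
  funext j
  simp [e, Pi.single_apply, eq_comm]

lemma e_nonneg (i j : Fin n) : 0 ≤ e i j := by
  simp [e, Pi.single_apply]
  split <;> norm_num

lemma e_mem_faceSet {J : Finset (Fin n)} {i : Fin n} (hi : i ∈ J) : e i ∈ faceSet J := by
  refine ⟨e_nonneg i, fun j hj => ?_⟩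
  simp [e, Pi.single_apply]
  rintro rfl; exact absurd hi hj

lemma faceSet_injective : Function.Injective (faceSet (n := n)) := by
  intro J K h
  ext i
  constructor <;> intro hi
  · by_contra hK
    have := (h ▸ e_mem_faceSet hi).2 i hK
    simp [e] at this
  · by_contra hJ
    have := (h.symm ▸ e_mem_faceSet hi).2 i hJ
    simp [e] at this

end A1

namespace A1
variable {n : ℕ}

lemma isFaceOf_iff (F : Set (Fin n → ℝ)) :
    IsFaceOf F {v : Fin n → ℝ | ∀ i, 0 ≤ v i} ↔ ∃ J : Finset (Fin n), F = faceSet J := by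
  constructor
  · rintro ⟨L, hL, rfl⟩
    refine ⟨Finset.univ.filter (fun i => L (e i) = 0), ?_⟩
    ext v
    simp only [Set.mem_inter_iff, Set.mem_setOf_eq, faceSet, Finset.mem_filter,
      Finset.mem_univ, true_and, not_and]
    constructor
    · rintro ⟨hv, hLv⟩
      refine ⟨hv, fun i hi => ?_⟩
      rw [L_apply] at hLv
      have hterm : ∀ j ∈ Finset.univ, 0 ≤ v j * L (e j) :=
        fun j _ => mul_nonneg (hv j) (hL (e j) (e_nonneg j))
      have := (Finset.sum_eq_zero_iff_of_nonneg hterm).1 hLv i (Finset.mem_univ i)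
      rcases mul_eq_zero.1 this with h | h
      · exact h
      · exact absurd h (by simpa using hi)
    · rintro ⟨hv, hz⟩
      refine ⟨hv, ?_⟩
      rw [L_apply]
      refine Finset.sum_eq_zero fun i _ => ?_
      by_cases hi : L (e i) = 0
      · rw [hi, mul_zero]
      · rw [hz i (by simpa using hi), zero_mul]
  · rintro ⟨J, rfl⟩
    refine ⟨∑ i ∈ Jᶜ, LinearMap.proj i, fun v hv => ?_, ?_⟩
    · simp only [LinearMap.coe_sum, Finset.sum_apply, LinearMap.proj_apply]
      exact Finset.sum_nonneg fun i _ => hv i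
    · ext v
      simp only [Set.mem_inter_iff, Set.mem_setOf_eq, faceSet, LinearMap.coe_sum,
        Finset.sum_apply, LinearMap.proj_apply]
      constructor
      · rintro ⟨hv, hz⟩
        exact ⟨hv, Finset.sum_eq_zero fun i hi => hz i (by simpa using hi)⟩
      · rintro ⟨hv, hsum⟩
        refine ⟨hv, fun i hi => ?_⟩
        exact (Finset.sum_eq_zero_iff_of_nonneg (fun j _ => hv j)).1 hsum i (by simpa using hi)

end A1

namespace A1
variable {n : ℕ}

def coordSub (J : Finset (Fin n)) : Submodule ℝ (Fin n → ℝ) where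
  carrier := {v | ∀ i ∉ J, v i = 0}
  add_mem' := fun ha hb i hi => by simp [Pi.add_apply, ha i hi, hb i hi]
  zero_mem' := fun i _ => rfl
  smul_mem' := fun c v hv i hi => by simp [hv i hi]

lemma span_faceSet (J : Finset (Fin n)) :
    Submodule.span ℝ (faceSet J) = coordSub J := by
  apply le_antisymm
  · rw [Submodule.span_le]
    intro v hv
    exact fun i hi => hv.2 i hi
  · intro v hv
    have h1 : (fun i => max (v i) 0) ∈ faceSet J :=
      ⟨fun i => le_max_right _ _, fun i hi => by simp [hv i hi]⟩
    have h2 : (fun i => max (-v i) 0) ∈ faceSet J :=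
      ⟨fun i => le_max_right _ _, fun i hi => by simp [hv i hi]⟩
    have : v = (fun i => max (v i) 0) - fun i => max (-v i) 0 := by
      funext i
      simp only [Pi.sub_apply]
      rcases le_total (v i) 0 with h | h
      · rw [max_eq_right h, max_eq_left (by linarith)]; ring
      · rw [max_eq_left h, max_eq_right (by linarith)]; ring
    rw [this]
    exact sub_mem (Submodule.subset_span h1) (Submodule.subset_span h2)

lemma sdim_faceSet (J : Finset (Fin n)) : sdim (faceSet J) = J.card := by
  have hspan : Submodule.span ℝ (faceSet J) =
      Submodule.span ℝ (↑(J.image e) : Set (Fin n → ℝ)) := by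
    apply le_antisymm
    · rw [Submodule.span_le]
      intro v hv
      have : v = ∑ i ∈ J, v i • e i := by
        funext j
        simp only [Finset.sum_apply, Pi.smul_apply, e, smul_eq_mul]
        by_cases hj : j ∈ J
        · rw [Finset.sum_eq_single j]
          · simp
          · intro b _ hb; simp [Pi.single_apply, hb]
          · intro h; exact absurd hj h
        · rw [hv.2 j hj]
          refine (Finset.sum_eq_zero fun i hi => ?_).symm
          have : i ≠ j := fun h => hj (h ▸ hi)
          simp [Pi.single_apply, this.symm]
      rw [this]
      exact Submodule.sum_mem _ fun i hi => Submodule.smul_mem _ _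
        (Submodule.subset_span (by simp; exact ⟨i, hi, rfl⟩))
    · rw [Submodule.span_le]
      intro v hv
      simp only [Finset.coe_image, Set.mem_image, Finset.mem_coe] at hv
      obtain ⟨i, hi, rfl⟩ := hv
      exact Submodule.subset_span (e_mem_faceSet hi)
  have he_inj : Function.Injective (e (n := n)) := by
    intro i j h
    by_contra hij
    have := congrFun h i
    simp [e, Pi.single_apply, hij] at this
  have hli : LinearIndependent ℝ ((↑) : (J.image e) → (Fin n → ℝ)) := by
    have hb := (Pi.basisFun ℝ (Fin n)).linearIndependent
    have : LinearIndependent ℝ (e (n := n)) := by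
      convert hb using 1
      funext i
      simp [e, Pi.basisFun_apply]
    have hrange := this.linearIndepOn_id
    apply hrange.mono
    intro v hv
    obtain ⟨i, _, rfl⟩ := Finset.mem_image.1 hv
    exact Set.mem_range_self i
  rw [sdim, hspan, finrank_span_finset_eq_card hli, Finset.card_image_of_injective _ he_inj]

lemma orthant_add_span (J : Finset (Fin n)) :
    {v : Fin n → ℝ | ∀ i, 0 ≤ v i} + (Submodule.span ℝ (faceSet J) : Set (Fin n → ℝ)) =
      {v : Fin n → ℝ | ∀ i ∉ J, 0 ≤ v i} := by
  rw [span_faceSet]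
  ext v
  constructor
  · rintro ⟨c, hc, w, hw, rfl⟩
    intro i hi
    have := hw i hi
    simp only [Pi.add_apply, this, add_zero]
    exact hc i
  · intro hv
    refine ⟨fun i => if i ∈ J then 0 else v i, fun i => ?_,
      fun i => if i ∈ J then v i else 0, fun i hi => by simp [hi], ?_⟩
    · by_cases hi : i ∈ J
      · simp [hi]
      · simpa [hi] using hv i hi
    · funext i
      by_cases hi : i ∈ J <;> simp [hi]

lemma dualCone_faceSet (J : Finset (Fin n)) :
    dualCone (faceSet J) = {L : Module.Dual ℝ (Fin n → ℝ) | ∀ i ∈ J, 0 ≤ L (e i)} := by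
  ext L
  constructor
  · intro hL i hi
    exact hL (e i) (e_mem_faceSet hi)
  · intro hL v hv
    rw [L_apply]
    refine Finset.sum_nonneg fun i _ => ?_
    by_cases hi : i ∈ J
    · exact mul_nonneg (hv.1 i) (hL i hi)
    · rw [hv.2 i hi, zero_mul]

end A1

namespace A1
variable {n : ℕ}

lemma comb (D B : Finset (Fin n)) :
    ∑ J : Finset (Fin n),
        ((-1 : ℤ) ^ J.card * (if D ⊆ J then 1 else 0) * (if J ⊆ B then 1 else 0)) =
      if B = D then (-1 : ℤ) ^ B.card else 0 := by
  have hterm : ∀ J : Finset (Fin n),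
      (-1 : ℤ) ^ J.card * (if D ⊆ J then 1 else 0) * (if J ⊆ B then 1 else 0) =
        if D ⊆ J ∧ J ⊆ B then (-1 : ℤ) ^ J.card else 0 := by
    intro J
    by_cases h1 : D ⊆ J <;> by_cases h2 : J ⊆ B <;> simp [h1, h2]
  simp only [hterm]
  rw [Finset.sum_ite, Finset.sum_const, smul_zero, add_zero]
  have hfil : Finset.univ.filter (fun J => D ⊆ J ∧ J ⊆ B) = Finset.Icc D B := by
    ext J
    simp [Finset.mem_Icc, Finset.le_iff_subset]
  rw [hfil]
  by_cases hDB : D ⊆ B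
  · have key : ∑ J ∈ Finset.Icc D B, (-1 : ℤ) ^ J.card =
        ∑ K ∈ (B \ D).powerset, (-1 : ℤ) ^ (K.card + D.card) := by
      refine Finset.sum_nbij' (fun J => J \ D) (fun K => K ∪ D) ?_ ?_ ?_ ?_ ?_
      · intro J hJ
        rw [Finset.mem_Icc] at hJ
        exact Finset.mem_powerset.2 (Finset.sdiff_subset_sdiff hJ.2 (le_refl D))
      · intro K hK
        rw [Finset.mem_powerset] at hK
        rw [Finset.mem_Icc]
        exact ⟨Finset.subset_union_right,
          Finset.union_subset (hK.trans (Finset.sdiff_subset)) hDB⟩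
      · intro J hJ
        rw [Finset.mem_Icc] at hJ
        exact Finset.sdiff_union_of_subset hJ.1
      · intro K hK
        rw [Finset.mem_powerset] at hK
        have hdisj : Disjoint K D := Finset.disjoint_of_subset_left hK Finset.sdiff_disjoint
        show (K ∪ D) \ D = K
        rw [Finset.union_sdiff_distrib, Finset.sdiff_self, Finset.union_empty,
          Finset.sdiff_eq_self_iff_disjoint.2 hdisj]
      · intro J hJ
        rw [Finset.mem_Icc] at hJ
        rw [Finset.card_sdiff_add_card_eq_card hJ.1]
    rw [key]
    simp only [pow_add, ← Finset.sum_mul, Finset.sum_powerset_neg_one_pow_card]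
    by_cases hBD : B = D
    · rw [if_pos hBD, if_pos (by rw [Finset.sdiff_eq_empty_iff_subset]; exact hBD ▸ le_refl D)]
      rw [one_mul, hBD]
    · rw [if_neg hBD, if_neg (fun h => hBD (Finset.Subset.antisymm
        (Finset.sdiff_eq_empty_iff_subset.1 h) hDB)), zero_mul]
  · rw [Finset.Icc_eq_empty (by exact fun h => hDB h), Finset.sum_empty, if_neg]
    rintro rfl
    exact hDB (le_refl _)

end A1

/-- **Lemma A.1**: for `X = ℝⁿ` and `C = (ℝ_{≥0})ⁿ`, with `X*` identified with `ℝⁿ`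
via the standard pairing, `ψ_C(x,λ) = 0` unless `I_x = {i | xᵢ ≥ 0}` and
`I_λ = {i | λᵢ ≥ 0}` are complementary, in which case `ψ_C(x,λ) = (−1)^{|I_λ|}`. -/
theorem lemma_A_1 (n : ℕ) (x l : Fin n → ℝ)
    (L : Module.Dual ℝ (Fin n → ℝ)) (hL : ∀ v : Fin n → ℝ, L v = ∑ i, l i * v i) :
    psi {v : Fin n → ℝ | ∀ i, 0 ≤ v i} x L =
      if {i : Fin n | 0 ≤ l i} = {i : Fin n | 0 ≤ x i}ᶜ then
        (-1) ^ ({i : Fin n | 0 ≤ l i}).ncard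
      else 0 := by
  classical
  set D : Finset (Fin n) := (Finset.univ.filter fun i => 0 ≤ x i)ᶜ with hD
  set B : Finset (Fin n) := Finset.univ.filter fun i => 0 ≤ l i with hB
  have hLe : ∀ i, L (A1.e i) = l i := by
    intro i
    rw [hL]
    rw [Finset.sum_eq_single i]
    · simp [A1.e]
    · intro b _ hb
      simp [A1.e, Pi.single_apply, Ne.symm hb]
    · intro h; exact absurd (Finset.mem_univ i) h
  have hfaces : {F : Set (Fin n → ℝ) | IsFaceOf F {v : Fin n → ℝ | ∀ i, 0 ≤ v i}} =
      ↑(Finset.image (A1.faceSet (n := n)) Finset.univ) := by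
    ext F
    simp only [Set.mem_setOf_eq, A1.isFaceOf_iff, Finset.coe_image, Set.mem_image,
      Finset.mem_coe, Finset.mem_univ, true_and]
    exact exists_congr fun J => eq_comm
  rw [psi, hfaces, finsum_mem_coe_finset,
    Finset.sum_image (fun J _ K _ h => A1.faceSet_injective h)]
  have hsummand : ∀ J : Finset (Fin n),
      (-1 : ℤ) ^ sdim (A1.faceSet J) *
        ind ({v : Fin n → ℝ | ∀ i, 0 ≤ v i} +
          (Submodule.span ℝ (A1.faceSet J) : Set (Fin n → ℝ))) x *
        ind (dualCone (A1.faceSet J)) L =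
      (-1 : ℤ) ^ J.card * (if D ⊆ J then 1 else 0) * (if J ⊆ B then 1 else 0) := by
    intro J
    rw [A1.sdim_faceSet, A1.orthant_add_span, A1.dualCone_faceSet]
    have h1 : (x ∈ {v : Fin n → ℝ | ∀ i ∉ J, 0 ≤ v i}) ↔ D ⊆ J := by
      simp only [Set.mem_setOf_eq]
      constructor
      · intro h i hi
        simp only [hD, Finset.mem_compl, Finset.mem_filter, Finset.mem_univ, true_and] at hi
        by_contra hiJ
        exact hi (h i hiJ)
      · intro h i hiJ
        by_contra hx
        exact hiJ (h (by
          simp only [hD, Finset.mem_compl, Finset.mem_filter, Finset.mem_univ, true_and]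
          exact hx))
    have h2 : (L ∈ {M : Module.Dual ℝ (Fin n → ℝ) | ∀ i ∈ J, 0 ≤ M (A1.e i)}) ↔ J ⊆ B := by
      simp only [Set.mem_setOf_eq]
      constructor
      · intro h i hi
        simp only [hB, Finset.mem_filter, Finset.mem_univ, true_and]
        rw [← hLe i]; exact h i hi
      · intro h i hi
        rw [hLe i]
        have := h hi
        simp only [hB, Finset.mem_filter, Finset.mem_univ, true_and] at this
        exact this
    simp only [ind, h1, h2]
  simp only [hsummand]
  rw [A1.comb D B]
  have e1 : ({i : Fin n | 0 ≤ l i}) = (↑B : Set (Fin n)) := by ext i; simp [hB]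
  have e2 : ({i : Fin n | 0 ≤ x i}ᶜ) = (↑D : Set (Fin n)) := by ext i; simp [hD]
  by_cases hBD : B = D
  · rw [if_pos hBD, if_pos (by rw [e1, e2, Finset.coe_inj]; exact hBD),
      e1, Set.ncard_coe_finset]
  · rw [if_neg hBD, if_neg (by rw [e1, e2, Finset.coe_inj]; exact hBD)]

end GKM
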